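/- Let G be a group generated by finitely many elements g_1, ..., g_m, let C be an abelian normal subgroup of G with B = G/C nontrivial, and suppose the group ring ZB is an Ore domain and C, viewed as a ZB-module, has no torsion. If λ: G → [[B, 0], [D, 1]] is a splitting of G over C, then the ZB-module D has no ZB-torsion and rank(D) = rank(C) + 1 ≤ m. -/

import Mathlib

/-!
STATEMENT 9 (Lemma 3, part 1): Let `G` be generated by `g_1, ..., g_m`, `C` an abelian
normal subgroup with `B = G/C` nontrivial; suppose `ℤB` is an Ore domain and `C` (as a
`ℤB`-module via conjugation) has no torsion. If `λ : G → [[B,0],[D,1]]` is a splitting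
of `G` over `C`, then `D` has no `ℤB`-torsion and `rank D = rank C + 1 ≤ m`. Here
`rank C` is the rank of `ker σ`, which is `d(C) ≅ C`; the rank of a module over a ring
`R` is `Module.rank`, the supremum of cardinalities of `R`-linearly independent sets.
-/

/-- The elements of the abelian normal subgroup `C` are torsion-free under the natural
right `ℤ[G/C]`-module structure given by conjugation, expressed elementwise: a nonzero
group-ring element (representatives `h j` of pairwise distinct cosets mod `C`, integer
coefficients `m j`, not all zero) applied to `c ∈ C` is trivial only if `c` is. -/
def ConjTorsionFree {G : Type*} [Group G] (C : Subgroup G) : Prop :=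
  ∀ c ∈ C, ∀ (k : ℕ) (h : Fin k → G) (m : Fin k → ℤ),
    (∀ j l : Fin k, j ≠ l → (h j)⁻¹ * h l ∉ C) → (∃ j, m j ≠ 0) →
    (List.ofFn fun j => ((h j)⁻¹ * c * h j) ^ m j).prod = 1 → c = 1

/-- `(d, σ)` is a matrix splitting of `G` over `C` with `B = G/C`: the right
`ℤB`-module `D` (a left module over `(ℤB)ᵐᵒᵖ`) together with the injective homomorphism
`λ : g ↦ [[ḡ, 0], [d g, 1]]` into the matrix group `[[B, 0], [D, 1]]`. Injectivity of
`λ` is injectivity of `g ↦ (ḡ, d g)`, and `λ` being a homomorphism is the cocycle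
identity `d (g h) = d g • h̄ + d h`. Moreover (1) `D` is generated by the `d g`;
(2) `σ` is a module epimorphism of `D` onto the fundamental (augmentation) ideal
`(B−1)·ℤB = {x | Σ coefficients of x = 0}` with `σ (d g) = ḡ − 1`; (3) `ker σ = d(C)`. -/
def IsMatrixSplitting {G : Type*} [Group G] (C : Subgroup G) [C.Normal]
    {D : Type*} [AddCommGroup D] [Module (MonoidAlgebra ℤ (G ⧸ C))ᵐᵒᵖ D]
    (d : G → D)
    (σ : D →ₗ[(MonoidAlgebra ℤ (G ⧸ C))ᵐᵒᵖ] MonoidAlgebra ℤ (G ⧸ C)) : Prop :=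
  Function.Injective (fun g : G => ((g : G ⧸ C), d g)) ∧
  (∀ g h : G, d (g * h) =
    MulOpposite.op (MonoidAlgebra.of ℤ (G ⧸ C) ((h : G ⧸ C))) • d g + d h) ∧
  Submodule.span (MonoidAlgebra ℤ (G ⧸ C))ᵐᵒᵖ (Set.range d) = ⊤ ∧
  (∀ g : G, σ (d g) = MonoidAlgebra.of ℤ (G ⧸ C) ((g : G ⧸ C)) - 1) ∧
  Set.range σ = {x : MonoidAlgebra ℤ (G ⧸ C) | (x.coeff.sum fun _ n => n) = 0} ∧
  (∀ x : D, σ x = 0 ↔ x ∈ d '' (C : Set G))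

/-- A bundled matrix splitting of `G` over `C`. -/
structure MatrixSplitting (G : Type*) [Group G] (C : Subgroup G) [C.Normal] where
  D : Type
  [instAdd : AddCommGroup D]
  [instMod : Module (MonoidAlgebra ℤ (G ⧸ C))ᵐᵒᵖ D]
  d : G → D
  σ : D →ₗ[(MonoidAlgebra ℤ (G ⧸ C))ᵐᵒᵖ] MonoidAlgebra ℤ (G ⧸ C)
  isSplitting : IsMatrixSplitting C d σ

/-- `R` is a (two-sided) Ore domain: a domain satisfying the right and left Ore
conditions. -/
def IsOreDomain (R : Type*) [Ring R] : Prop :=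
  (∀ a b : R, a * b = 0 → a = 0 ∨ b = 0) ∧
  (∀ a b : R, a ≠ 0 → b ≠ 0 → ∃ x y : R, a * x = b * y ∧ a * x ≠ 0) ∧
  (∀ a b : R, a ≠ 0 → b ≠ 0 → ∃ x y : R, x * a = y * b ∧ x * a ≠ 0)


open Cardinal in
theorem ciSup_add_one_le' {ι : Type} [Nonempty ι] (f : ι → Cardinal.{0}) (b : Cardinal)
    (h : ∀ i, f i + 1 ≤ b) : (⨆ i, f i) + 1 ≤ b := by
  by_cases hinf : ℵ₀ ≤ ⨆ i, f i
  · rw [Cardinal.add_one_eq hinf]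
    exact ciSup_le fun i => le_trans (self_le_add_right _ 1) (h i)
  · push_neg at hinf
    obtain ⟨n, hn⟩ := Cardinal.lt_aleph0.mp hinf
    cases n with
    | zero =>
      inhabit ι
      rw [hn]
      exact le_trans (by simp) (h default)
    | succ k =>
      have hk : (k : Cardinal) < ⨆ i, f i := by
        rw [hn]; exact_mod_cast Nat.lt_succ_self k
      obtain ⟨i, hi⟩ := (lt_ciSup_iff (Cardinal.bddAbove_range f)).mp hk
      have h1 : ((k : Cardinal) + 1) ≤ f i := by
        rw [← Cardinal.succ_natCast]
        exact Order.succ_le_of_lt hi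
      have h2 : f i = ⨆ i, f i := le_antisymm (le_ciSup (Cardinal.bddAbove_range f) i)
        (by rw [hn]; push_cast; exact h1)
      rw [← h2]; exact h i

theorem ore_left_kernel {S : Type*} [Ring S] [Nontrivial S]
    (hdom : ∀ a b : S, a * b = 0 → a = 0 ∨ b = 0)
    (hore : ∀ a b : S, a ≠ 0 → b ≠ 0 → ∃ x y : S, x * a = y * b ∧ x * a ≠ 0) :
    ∀ (m : ℕ) (ι : Type) [Fintype ι] [DecidableEq ι], m < Fintype.card ι →
      ∀ a : Fin m → ι → S, ∃ u : ι → S, u ≠ 0 ∧ ∀ i, ∑ j, u j * a i j = 0 := by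
  intro m
  induction m with
  | zero =>
    intro ι _ _ hcard a
    obtain ⟨j⟩ := Fintype.card_pos_iff.mp hcard
    refine ⟨fun j' => if j' = j then 1 else 0, ?_, fun i => Fin.elim0 i⟩
    intro h
    have := congrFun h j
    simp at this
  | succ m ih =>
    intro ι _ _ hcard a
    by_cases h0 : ∀ j, a 0 j = 0
    · have hm : m < Fintype.card ι := Nat.lt_of_succ_lt hcard
      obtain ⟨u, hu, hker⟩ := ih ι hm (fun i j => a i.succ j)
      refine ⟨u, hu, fun i => ?_⟩
      rcases Fin.eq_zero_or_eq_succ i with rfl | ⟨i', rfl⟩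
      · simp [h0]
      · exact hker i'
    · push_neg at h0
      obtain ⟨j0, hj0⟩ := h0
      -- choice of x y for each j ≠ j0
      have hchoice : ∀ j : ι, ∃ x y : S, x ≠ 0 ∧ x * a 0 j = y * a 0 j0 := by
        intro j
        by_cases hz : a 0 j = 0
        · exact ⟨1, 0, one_ne_zero, by simp [hz]⟩
        · obtain ⟨x, y, hxy, hne⟩ := hore (a 0 j) (a 0 j0) hz hj0
          exact ⟨x, y, fun h => hne (by rw [h, zero_mul]), hxy⟩
      choose X Y hX hXY using hchoice
      have hcard' : m < Fintype.card {j : ι // j ≠ j0} := by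
        have := Fintype.card_subtype_compl (fun j : ι => j = j0)
        rw [Fintype.card_subtype_eq] at this
        show m < Fintype.card {j : ι // ¬ j = j0}
        omega
      obtain ⟨w, hw, hker⟩ := ih {j : ι // j ≠ j0} hcard'
        (fun i j => X j * a i.succ j - Y j * a i.succ j0)
      classical
      refine ⟨fun j => if h : j = j0 then -∑ j' : {j : ι // j ≠ j0}, w j' * Y j'
        else w ⟨j, h⟩ * X j, ?_, ?_⟩
      · obtain ⟨j', hj'⟩ : ∃ j', w j' ≠ 0 := by
          by_contra hc; push_neg at hc; exact hw (funext hc)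
        intro hc
        have := congrFun hc j'
        rw [dif_neg j'.2] at this
        rcases hdom _ _ this with h | h
        · exact hj' h
        · exact hX _ h
      · intro i
        rw [Fintype.sum_eq_add_sum_compl j0, Finset.sum_subtype (p := fun j => j ≠ j0)
          ({j0}ᶜ : Finset ι) (fun x => by simp)
          (fun j => (if h : j = j0 then -∑ j' : {j : ι // j ≠ j0}, w j' * Y j' else w ⟨j, h⟩ * X j) * a i j)]
        beta_reduce
        rw [dif_pos rfl]
        have hrest : ∀ j' : {j : ι // j ≠ j0},
            (if h : (j' : ι) = j0 then -∑ j'' : {j : ι // j ≠ j0}, w j'' * Y j''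
              else w ⟨j', h⟩ * X j') * a i j' = w j' * X j' * a i j' := by
          intro j'; rw [dif_neg j'.2]
        rw [Finset.sum_congr rfl (fun j' _ => hrest j')]
        rcases Fin.eq_zero_or_eq_succ i with rfl | ⟨i', rfl⟩
        · have : ∀ j' : {j : ι // j ≠ j0}, w j' * X j' * a 0 j' = w j' * Y j' * a 0 j0 := by
            intro j'; rw [mul_assoc, hXY, ← mul_assoc]
          rw [Finset.sum_congr rfl (fun j' _ => this j'), neg_mul, Finset.sum_mul]
          exact neg_add_cancel _
        · have hk := hker i'
          have : ∀ j' : {j : ι // j ≠ j0}, w j' * X j' * a i'.succ j' =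
              w j' * (X j' * a i'.succ j' - Y j' * a i'.succ j0) + w j' * Y j' * a i'.succ j0 := by
            intro j'
            rw [mul_sub, ← mul_assoc, ← mul_assoc, sub_add_cancel]
          rw [Finset.sum_congr rfl (fun j' _ => this j'), Finset.sum_add_distrib, hk,
            neg_mul, Finset.sum_mul, zero_add]
          exact neg_add_cancel _


set_option maxHeartbeats 1000000 in
theorem stmt9 {G : Type} [Group G] (m : ℕ) (g : Fin m → G)
    (hgen : Subgroup.closure (Set.range g) = ⊤)
    (C : Subgroup G) [C.Normal] (habel : ∀ x ∈ C, ∀ y ∈ C, x * y = y * x)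
    (hC : C ≠ ⊤)
    (hOre : IsOreDomain (MonoidAlgebra ℤ (G ⧸ C)))
    (hTF : ConjTorsionFree C)
    (D : Type) [AddCommGroup D] [Module (MonoidAlgebra ℤ (G ⧸ C))ᵐᵒᵖ D]
    (d : G → D) (σ : D →ₗ[(MonoidAlgebra ℤ (G ⧸ C))ᵐᵒᵖ] MonoidAlgebra ℤ (G ⧸ C))
    (hsplit : IsMatrixSplitting C d σ) :
    (∀ (x : D) (u : MonoidAlgebra ℤ (G ⧸ C)),
      MulOpposite.op u • x = 0 → x = 0 ∨ u = 0) ∧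
    Module.rank (MonoidAlgebra ℤ (G ⧸ C))ᵐᵒᵖ D =
      Module.rank (MonoidAlgebra ℤ (G ⧸ C))ᵐᵒᵖ (LinearMap.ker σ) + 1 ∧
    Module.rank (MonoidAlgebra ℤ (G ⧸ C))ᵐᵒᵖ D ≤ m := by
  classical
  obtain ⟨hinj, hcoc, hspan, hσd, hrange, hker⟩ := hsplit
  have hq1 : ∀ c ∈ C, ((c : G) : G ⧸ C) = 1 := fun c hc => (QuotientGroup.eq_one_iff c).mpr hc
  have hd1 : d 1 = 0 := by
    have h2 : MulOpposite.op (MonoidAlgebra.single (1 : G ⧸ C) (1 : ℤ)) • d 1 = 0 := by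
      simpa using hcoc 1 1
    rwa [← MonoidAlgebra.one_def, MulOpposite.op_one, one_smul] at h2
  have hdinv : ∀ h : G,
      MulOpposite.op (MonoidAlgebra.of ℤ (G ⧸ C) ((h : G ⧸ C))) • d h⁻¹ = - d h := by
    intro h
    have h2 := hcoc h⁻¹ h
    rw [inv_mul_cancel, hd1] at h2
    exact eq_neg_of_add_eq_zero_left h2.symm
  have hdmulC : ∀ (a : G), ∀ c ∈ C, d (a * c) = d a + d c := by
    intro a c hc
    rw [hcoc a c, hq1 c hc, map_one, MulOpposite.op_one, one_smul]
  have hdCinv : ∀ c ∈ C, d c⁻¹ = - d c := by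
    intro c hc
    have h2 := hdmulC c c⁻¹ (inv_mem hc)
    rw [mul_inv_cancel, hd1] at h2
    exact eq_neg_of_add_eq_zero_right h2.symm
  have hdpow : ∀ c ∈ C, ∀ n : ℕ, d (c ^ n) = n • d c := by
    intro c hc n
    induction n with
    | zero => simpa using hd1
    | succ k ihk => rw [pow_succ, hdmulC _ c hc, ihk, succ_nsmul]
  have hdzpow : ∀ c ∈ C, ∀ n : ℤ, d (c ^ n) = n • d c := by
    intro c hc n
    cases n with
    | ofNat k => rw [Int.ofNat_eq_coe, zpow_natCast, hdpow c hc k, natCast_zsmul]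
    | negSucc k =>
      rw [zpow_negSucc, hdCinv _ (pow_mem hc _), hdpow c hc, Int.negSucc_eq, neg_smul]
      norm_cast
  have hdconj : ∀ c ∈ C, ∀ h : G, d (h⁻¹ * c * h) =
      MulOpposite.op (MonoidAlgebra.of ℤ (G ⧸ C) ((h : G ⧸ C))) • d c := by
    intro c hc h
    have h1 := hcoc (h⁻¹ * c) h
    have h2 : d (h⁻¹ * c) = d h⁻¹ + d c := hdmulC h⁻¹ c hc
    rw [h2, smul_add, hdinv h] at h1
    rw [h1]
    abel
  have hdCker : ∀ c ∈ C, d c = 0 → c = 1 := by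
    intro c hc h0
    apply hinj
    show ((c : G ⧸ C), d c) = (((1 : G) : G ⧸ C), d 1)
    rw [hq1 c hc, hd1, h0, QuotientGroup.mk_one]
  have hdomop : ∀ a b : (MonoidAlgebra ℤ (G ⧸ C))ᵐᵒᵖ, a * b = 0 → a = 0 ∨ b = 0 := by
    intro a b hab
    have h2 : b.unop * a.unop = 0 := by
      have := congrArg MulOpposite.unop hab
      simpa using this
    rcases hOre.1 _ _ h2 with h | h
    · exact Or.inr (MulOpposite.unop_injective (by simpa using h))
    · exact Or.inl (MulOpposite.unop_injective (by simpa using h))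
  have hTFD : ∀ (x : D) (u : MonoidAlgebra ℤ (G ⧸ C)),
      MulOpposite.op u • x = 0 → x = 0 ∨ u = 0 := by
    intro x u hux
    by_cases hu : u = 0
    · exact Or.inr hu
    refine Or.inl ?_
    have hσx : σ x * u = 0 := by
      have h2 := σ.map_smul (MulOpposite.op u) x
      rw [hux, map_zero] at h2
      exact h2.symm
    have hσx0 : σ x = 0 := (hOre.1 _ _ hσx).resolve_right hu
    obtain ⟨c, hcC, rfl⟩ := (hker x).mp hσx0
    -- now x = d c; show d c = 0 by proving c = 1
    have hksupp : 0 < u.coeff.support.card := by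
      rcases Finset.Nonempty.card_pos (Finsupp.support_nonempty_iff.mpr (mt MonoidAlgebra.coeff_eq_zero.mp hu)) with h
      exact h
    set k := u.coeff.support.card with hkdef
    set e : ↥u.coeff.support ≃ Fin k := u.coeff.support.equivFin with hedef
    set b : Fin k → G ⧸ C := fun j => ↑(e.symm j) with hbdef
    set hh : Fin k → G := fun j => (b j).out with hhdef
    have hhb : ∀ j, ((hh j : G) : G ⧸ C) = b j := fun j => QuotientGroup.out_eq' (b j)
    set mm : Fin k → ℤ := fun j => u.coeff (b j) with hmmdef
    have hmm : ∀ j, mm j ≠ 0 := fun j => Finsupp.mem_support_iff.mp (e.symm j).2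
    have hconj_mem : ∀ j, (hh j)⁻¹ * c * hh j ∈ C := by
      intro j
      have := ‹C.Normal›.conj_mem c hcC (hh j)⁻¹
      rwa [inv_inv] at this
    have hlist : ∀ x ∈ List.ofFn (fun j => ((hh j)⁻¹ * c * hh j) ^ mm j), x ∈ C := by
      intro x hx
      rw [List.mem_ofFn] at hx
      obtain ⟨j, rfl⟩ := hx
      exact zpow_mem (hconj_mem j) _
    have hP : (List.ofFn fun j => ((hh j)⁻¹ * c * hh j) ^ mm j).prod ∈ C := by
      apply list_prod_mem
      exact hlist
    have hdlist : ∀ l : List G, (∀ x ∈ l, x ∈ C) → d l.prod = (l.map d).sum := by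
      intro l
      induction l with
      | nil => simpa using hd1
      | cons a t iht =>
        intro hmem
        have hta : ∀ x ∈ t, x ∈ C := fun x hx => hmem x (List.mem_cons_of_mem a hx)
        rw [List.prod_cons, hdmulC a t.prod (list_prod_mem hta), iht hta, List.map_cons,
          List.sum_cons]
    have hterm : ∀ j, d (((hh j)⁻¹ * c * hh j) ^ mm j) =
        MulOpposite.op (MonoidAlgebra.single (b j) (mm j)) • d c := by
      intro j
      rw [hdzpow _ (hconj_mem j), hdconj c hcC (hh j), hhb j]
      have hsingle : MonoidAlgebra.single (b j) (mm j)
          = mm j • MonoidAlgebra.of ℤ (G ⧸ C) (b j) := by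
        rw [MonoidAlgebra.of_apply, MonoidAlgebra.smul_single, smul_eq_mul, mul_one]
      rw [hsingle, MulOpposite.op_smul, smul_assoc]
    have hsum : (∑ j : Fin k, MonoidAlgebra.single (b j) (mm j)) = u := by
      have h1 : (∑ j : Fin k, MonoidAlgebra.single (b j) (mm j))
          = ∑ x : ↥u.coeff.support, MonoidAlgebra.single (↑x) (u.coeff ↑x) := by
        rw [← Equiv.sum_comp e.symm
          (fun x : ↥u.coeff.support => MonoidAlgebra.single (↑x : G ⧸ C) (u.coeff ↑x))]
      rw [h1, Finset.sum_coe_sort u.coeff.support (fun a => MonoidAlgebra.single a (u.coeff a))]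
      conv_rhs => rw [← MonoidAlgebra.sum_coeff_single u]
      rfl
    have hdP : d ((List.ofFn fun j => ((hh j)⁻¹ * c * hh j) ^ mm j).prod) = 0 := by
      rw [hdlist _ hlist, List.map_ofFn, List.sum_ofFn]
      calc (∑ j : Fin k, d (((hh j)⁻¹ * c * hh j) ^ mm j))
          = ∑ j : Fin k, MulOpposite.op (MonoidAlgebra.single (b j) (mm j)) • d c :=
            Finset.sum_congr rfl (fun j _ => hterm j)
        _ = (∑ j : Fin k, MulOpposite.op (MonoidAlgebra.single (b j) (mm j))) • d c :=
            (Finset.sum_smul).symm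
        _ = MulOpposite.op (∑ j : Fin k, MonoidAlgebra.single (b j) (mm j)) • d c := by
            rw [Finset.op_sum]
        _ = MulOpposite.op u • d c := by rw [hsum]
        _ = 0 := hux
    have hprod1 : (List.ofFn fun j => ((hh j)⁻¹ * c * hh j) ^ mm j).prod = 1 :=
      hdCker _ hP hdP
    have hdistinct : ∀ j l : Fin k, j ≠ l → (hh j)⁻¹ * hh l ∉ C := by
      intro j l hne hmem
      apply hne
      have hq : ((hh j : G) : G ⧸ C) = ((hh l : G) : G ⧸ C) := (QuotientGroup.eq (s := C)).mpr hmem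
      rw [hhb j, hhb l] at hq
      have : e.symm j = e.symm l := Subtype.ext hq
      exact e.symm.injective this
    have hc1 : c = 1 := hTF c hcC k hh mm hdistinct
      ⟨⟨0, hksupp⟩, hmm _⟩ hprod1
    rw [hc1]
    exact hd1
  -- D is spanned by the images of the generators
  have hspanD : ∀ x : D, ∃ cc : Fin m → (MonoidAlgebra ℤ (G ⧸ C))ᵐᵒᵖ,
      ∑ i, cc i • d (g i) = x := by
    have htop : Submodule.span (MonoidAlgebra ℤ (G ⧸ C))ᵐᵒᵖ
        (Set.range fun i => d (g i)) = ⊤ := by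
      rw [← top_le_iff, ← hspan, Submodule.span_le]
      rintro _ ⟨y, rfl⟩
      let H : Subgroup G :=
        { carrier := {z : G | d z ∈ Submodule.span (MonoidAlgebra ℤ (G ⧸ C))ᵐᵒᵖ
            (Set.range fun i => d (g i))}
          one_mem' := by
            show d 1 ∈ Submodule.span (MonoidAlgebra ℤ (G ⧸ C))ᵐᵒᵖ (Set.range fun i => d (g i))
            rw [hd1]; exact Submodule.zero_mem _
          mul_mem' := by
            intro a b ha hb
            show d (a * b) ∈ Submodule.span (MonoidAlgebra ℤ (G ⧸ C))ᵐᵒᵖ (Set.range fun i => d (g i))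
            rw [hcoc a b]
            exact Submodule.add_mem _ (Submodule.smul_mem _ _ ha) hb
          inv_mem' := by
            intro a ha
            show d a⁻¹ ∈ Submodule.span (MonoidAlgebra ℤ (G ⧸ C))ᵐᵒᵖ (Set.range fun i => d (g i))
            have h2 := hdinv a⁻¹
            rw [inv_inv] at h2
            have h3 : d a⁻¹ = -(MulOpposite.op ((MonoidAlgebra.of ℤ (G ⧸ C))
                ((a⁻¹ : G) : G ⧸ C)) • d a) := by rw [h2, neg_neg]
            rw [h3]
            exact Submodule.neg_mem _ (Submodule.smul_mem _ _ ha) }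
      have hcl : Subgroup.closure (Set.range g) ≤ H := by
        rw [Subgroup.closure_le]
        rintro _ ⟨i, rfl⟩
        exact Submodule.subset_span ⟨i, rfl⟩
      rw [hgen] at hcl
      exact hcl (Subgroup.mem_top y)
    intro x
    rw [← Submodule.mem_span_range_iff_exists_fun, htop]
    trivial
  have horeop : ∀ a b : (MonoidAlgebra ℤ (G ⧸ C))ᵐᵒᵖ, a ≠ 0 → b ≠ 0 →
      ∃ x y, x * a = y * b ∧ x * a ≠ 0 := by
    intro a b ha hb
    obtain ⟨p, q, hpq, hne⟩ := hOre.2.1 a.unop b.unop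
      (fun h => ha (MulOpposite.unop_injective (by simpa using h)))
      (fun h => hb (MulOpposite.unop_injective (by simpa using h)))
    refine ⟨MulOpposite.op p, MulOpposite.op q, ?_, ?_⟩
    · apply MulOpposite.unop_injective
      simpa using hpq
    · intro h
      apply hne
      have := congrArg MulOpposite.unop h
      simpa using this
  have hrankm : Module.rank (MonoidAlgebra ℤ (G ⧸ C))ᵐᵒᵖ D ≤ (m : Cardinal) := by
    rw [Module.rank_def]
    apply ciSup_le'
    rintro ⟨s, hs⟩
    show Cardinal.mk (↥s) ≤ (m : Cardinal)
    by_contra hlt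
    push_neg at hlt
    have hle : ((m + 1 : ℕ) : Cardinal) ≤ Cardinal.mk (↥s) := by
      have h2 := Order.succ_le_of_lt hlt
      rwa [Cardinal.succ_natCast, ← Nat.cast_succ] at h2
    obtain ⟨f⟩ : Nonempty (Fin (m + 1) ↪ ↥s) := by
      rw [← Cardinal.mk_fin (m + 1)] at hle
      exact Cardinal.le_def _ _ |>.mp hle
    have hx : LinearIndependent (MonoidAlgebra ℤ (G ⧸ C))ᵐᵒᵖ
        (fun j : Fin (m + 1) => ((f j : ↥s) : D)) := hs.comp f f.injective
    choose cc hcc using fun j : Fin (m + 1) => hspanD ((f j : ↥s) : D)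
    obtain ⟨u, hu, huk⟩ := ore_left_kernel hdomop horeop m (Fin (m + 1))
      (by simp) (fun i j => cc j i)
    have hzero : ∑ j, u j • ((f j : ↥s) : D) = 0 := by
      calc ∑ j, u j • ((f j : ↥s) : D)
          = ∑ j, u j • (∑ i, cc j i • d (g i)) := by
            exact Finset.sum_congr rfl (fun j _ => by rw [hcc j])
        _ = ∑ j, ∑ i, (u j * cc j i) • d (g i) := by
            simp [Finset.smul_sum, smul_smul]
        _ = ∑ i, (∑ j, u j * cc j i) • d (g i) := by
            rw [Finset.sum_comm]
            exact Finset.sum_congr rfl (fun i _ => (Finset.sum_smul).symm)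
        _ = 0 := by
            refine Finset.sum_eq_zero (fun i _ => ?_)
            rw [huk i, zero_smul]
    have hzz := Fintype.linearIndependent_iff.mp hx u hzero
    exact hu (funext hzz)
  -- an element outside C, giving an element of D with nonzero image under σ
  obtain ⟨g0, hg0⟩ : ∃ g0 : G, g0 ∉ C := by
    by_contra hcon
    push_neg at hcon
    exact hC ((Subgroup.eq_top_iff' C).mpr hcon)
  have hσe : σ (d g0) ≠ 0 := by
    rw [hσd g0]
    intro hzero
    rw [sub_eq_zero] at hzero
    have h2 : ((g0 : G) : G ⧸ C) = 1 := by
      apply MonoidAlgebra.of_injective (R := ℤ)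
      rw [hzero, map_one]
    exact hg0 ((QuotientGroup.eq_one_iff g0).mp h2)
  -- rank (ker σ) + 1 ≤ rank D
  have hge : Module.rank (MonoidAlgebra ℤ (G ⧸ C))ᵐᵒᵖ (LinearMap.ker σ) + 1 ≤
      Module.rank (MonoidAlgebra ℤ (G ⧸ C))ᵐᵒᵖ D := by
    rw [Module.rank_def (MonoidAlgebra ℤ (G ⧸ C))ᵐᵒᵖ (LinearMap.ker σ)]
    haveI := nonempty_linearIndependent_set (MonoidAlgebra ℤ (G ⧸ C))ᵐᵒᵖ
      (↥(LinearMap.ker σ))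
    apply ciSup_add_one_le'
    rintro ⟨s, hs⟩
    show Cardinal.mk ↥s + 1 ≤ _
    rw [← Cardinal.mk_option]
    apply LinearIndependent.cardinal_le_rank
      (v := fun o : Option ↥s => Option.elim o (d g0)
        (fun y => ((y : ↥(LinearMap.ker σ)) : D)))
    rw [linearIndependent_iff'']
    intro t c hc0 hsum
    have hsub : t ⊆ Finset.insertNone t.eraseNone := by
      intro o ho
      cases o with
      | none => exact Finset.none_mem_insertNone
      | some y => rw [Finset.some_mem_insertNone, Finset.mem_eraseNone]; exact ho
    have hbig : ∀ f : Option ↥s → D,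
        (∑ o ∈ Finset.insertNone t.eraseNone, c o • f o) = ∑ o ∈ t, c o • f o := by
      intro f
      refine (Finset.sum_subset hsub (fun o _ ho => ?_)).symm
      rw [hc0 o ho, zero_smul]
    have hsum2 : c none • d g0 + ∑ y ∈ t.eraseNone,
        c (some y) • ((y : ↥(LinearMap.ker σ)) : D) = 0 := by
      have h9 : (∑ o ∈ Finset.insertNone t.eraseNone, c o • (Option.elim o (d g0)
          (fun y => ((y : ↥(LinearMap.ker σ)) : D)))) = 0 := by
        rw [hbig _]
        exact hsum
      rwa [Finset.sum_insertNone] at h9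
    have hcnone : c none = 0 := by
      have hσ2 := congrArg σ hsum2
      rw [map_add, map_smul, map_sum, map_zero] at hσ2
      have hz : ∀ y ∈ t.eraseNone,
          σ (c (some y) • ((y : ↥(LinearMap.ker σ)) : D)) = 0 := by
        intro y _
        rw [map_smul, LinearMap.mem_ker.mp (y : ↥(LinearMap.ker σ)).2, smul_zero]
      rw [Finset.sum_congr rfl hz, Finset.sum_const_zero, add_zero] at hσ2
      have h3 : σ (d g0) * (c none).unop = 0 := hσ2
      rcases hOre.1 _ _ h3 with h | h
      · exact absurd h hσe
      · exact MulOpposite.unop_injective (by simpa using h)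
    rw [hcnone, zero_smul, zero_add] at hsum2
    have hsum5 : (∑ y ∈ t.eraseNone, c (some y) • (y : ↥(LinearMap.ker σ))) = 0 := by
      have h4 : (((∑ y ∈ t.eraseNone, c (some y) • (y : ↥(LinearMap.ker σ)))
          : ↥(LinearMap.ker σ)) : D) = 0 := by
        push_cast
        rw [← hsum2]
      exact Subtype.ext h4
    have hz := linearIndependent_iff'.mp hs t.eraseNone (fun y => c (some y)) hsum5
    intro o
    cases o with
    | none => exact hcnone
    | some y =>
      by_cases hy : some y ∈ t
      · exact hz y (Finset.mem_eraseNone.mpr hy)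
      · exact hc0 _ hy
  -- rank D ≤ rank (ker σ) + 1
  have hle2 : Module.rank (MonoidAlgebra ℤ (G ⧸ C))ᵐᵒᵖ D ≤
      Module.rank (MonoidAlgebra ℤ (G ⧸ C))ᵐᵒᵖ (LinearMap.ker σ) + 1 := by
    conv_lhs => rw [Module.rank_def]
    apply ciSup_le'
    rintro ⟨s, hs⟩
    show Cardinal.mk ↥s ≤ _
    by_cases hse : ∃ x ∈ s, σ x ≠ 0
    · obtain ⟨e, hes, hσe2⟩ := hse
      have hUVex : ∀ x : D, ∃ p q : MonoidAlgebra ℤ (G ⧸ C),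
          p ≠ 0 ∧ σ x * p = σ e * q := by
        intro x
        by_cases hx : σ x = 0
        · exact ⟨1, 0, one_ne_zero, by rw [hx, zero_mul, mul_zero]⟩
        · obtain ⟨p, q, hpq, hne⟩ := hOre.2.1 (σ x) (σ e) hx hσe2
          exact ⟨p, q, fun h => hne (by rw [h, mul_zero]), hpq⟩
      choose U V hU hUVeq using hUVex
      have hTmem : ∀ x : D,
          σ (MulOpposite.op (U x) • x - MulOpposite.op (V x) • e) = 0 := by
        intro x
        rw [map_sub, map_smul, map_smul]
        show σ x * U x - σ e * V x = 0
        rw [hUVeq x, sub_self]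
      set T : ↥(s \ {e} : Set D) → ↥(LinearMap.ker σ) := fun i =>
        ⟨MulOpposite.op (U ↑i) • (↑i : D) - MulOpposite.op (V ↑i) • e,
          LinearMap.mem_ker.mpr (hTmem ↑i)⟩ with hTdef
      have hembinj : Function.Injective
          (fun i : ↥(s \ {e} : Set D) => (⟨↑i, i.2.1⟩ : ↥s)) := by
        intro a b hab
        have h := congrArg (fun z : ↥s => (z : D)) hab
        exact Subtype.ext h
      have hTind : LinearIndependent (MonoidAlgebra ℤ (G ⧸ C))ᵐᵒᵖ T := by
        rw [linearIndependent_iff']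
        intro t w hsum i hit
        set emb : ↥(s \ {e} : Set D) → ↥s := fun i => ⟨↑i, i.2.1⟩ with hembdef
        set tE : Finset ↥s := (t.image emb) ∪ {⟨e, hes⟩} with htEdef
        set cfun : ↥s → (MonoidAlgebra ℤ (G ⧸ C))ᵐᵒᵖ := fun y =>
          (∑ i' ∈ t, if emb i' = y then w i' * MulOpposite.op (U ↑i') else 0) +
          (if y = ⟨e, hes⟩ then -∑ i' ∈ t, w i' * MulOpposite.op (V ↑i') else 0)
          with hcfundef
        have hcemb : ∀ i' ∈ t, cfun (emb i') = w i' * MulOpposite.op (U ↑i') := by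
          intro i' hi'
          rw [hcfundef]
          beta_reduce
          rw [if_neg (fun h : emb i' = ⟨e, hes⟩ => i'.2.2 (congrArg Subtype.val h)),
            add_zero]
          simp only [hembinj.eq_iff]
          rw [Finset.sum_ite_eq' t i' (fun i'' => w i'' * MulOpposite.op (U ↑i'')),
            if_pos hi']
        have hcE : cfun ⟨e, hes⟩ = -∑ i' ∈ t, w i' * MulOpposite.op (V ↑i') := by
          rw [hcfundef]
          beta_reduce
          rw [if_pos rfl, Finset.sum_eq_zero, zero_add]
          intro i' _
          rw [if_neg (fun h : emb i' = ⟨e, hes⟩ => i'.2.2 (congrArg Subtype.val h))]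
        have hD : (∑ i' ∈ t, w i' • ((T i' : ↥(LinearMap.ker σ)) : D)) = 0 := by
          have h5 := congrArg (fun z : ↥(LinearMap.ker σ) => (z : D)) hsum
          push_cast at h5
          rw [← h5]
        have hkey := linearIndependent_iff''.mp hs tE cfun ?_ ?_
        · have h6 := hkey (emb i)
          rw [hcemb i hit] at h6
          rcases hdomop _ _ h6 with h | h
          · exact h
          · exact absurd (by simpa using congrArg MulOpposite.unop h) (hU ↑i)
        · -- cfun vanishes outside tE
          intro y hy
          rw [hcfundef]
          beta_reduce
          rw [if_neg (fun h : y = ⟨e, hes⟩ =>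
              hy (h ▸ Finset.mem_union_right _ (Finset.mem_singleton_self _))),
            add_zero]
          refine Finset.sum_eq_zero (fun i' hi' => ?_)
          rw [if_neg]
          intro h
          exact hy (h ▸ Finset.mem_union_left _ (Finset.mem_image_of_mem emb hi'))
        · -- the combination over tE vanishes
          have hdisj : Disjoint (t.image emb) ({⟨e, hes⟩} : Finset ↥s) := by
            rw [Finset.disjoint_singleton_right]
            intro hmem
            obtain ⟨i', _, hi'⟩ := Finset.mem_image.mp hmem
            exact i'.2.2 (congrArg Subtype.val hi')
          rw [htEdef, Finset.sum_union hdisj,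
            Finset.sum_image (fun a _ b _ h => hembinj h), Finset.sum_singleton]
          rw [Finset.sum_congr rfl (fun i' hi' => by rw [hcemb i' hi']), hcE]
          have hexp : (∑ i' ∈ t, w i' • ((T i' : ↥(LinearMap.ker σ)) : D))
              = ∑ i' ∈ t, ((w i' * MulOpposite.op (U ↑i')) • ((↑i' : D))
                - (w i' * MulOpposite.op (V ↑i')) • e) := by
            refine Finset.sum_congr rfl (fun i' _ => ?_)
            show w i' • (MulOpposite.op (U ↑i') • (↑i' : D)
              - MulOpposite.op (V ↑i') • e) = _
            rw [smul_sub, smul_smul, smul_smul]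
          rw [hexp, Finset.sum_sub_distrib, ← Finset.sum_smul] at hD
          rw [neg_smul, ← sub_eq_add_neg]
          exact hD
      have h1 : Cardinal.mk ↥(s \ {e} : Set D) ≤
          Module.rank (MonoidAlgebra ℤ (G ⧸ C))ᵐᵒᵖ (LinearMap.ker σ) :=
        hTind.cardinal_le_rank
      have h2 : Cardinal.mk ↥(s \ {e} : Set D) + 1 = Cardinal.mk ↥s := by
        have h3 := Cardinal.mk_diff_add_mk (Set.singleton_subset_iff.mpr hes)
        rwa [Cardinal.mk_singleton] at h3
      rw [← h2]
      exact add_le_add_left h1 1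
    · push_neg at hse
      have hv : LinearIndependent (MonoidAlgebra ℤ (G ⧸ C))ᵐᵒᵖ
          (fun y : ↥s => (⟨↑y, LinearMap.mem_ker.mpr (hse ↑y y.2)⟩
            : ↥(LinearMap.ker σ))) := by
        apply LinearIndependent.of_comp (LinearMap.ker σ).subtype
        exact hs
      calc Cardinal.mk ↥s ≤ Module.rank (MonoidAlgebra ℤ (G ⧸ C))ᵐᵒᵖ
            (LinearMap.ker σ) := hv.cardinal_le_rank
        _ ≤ _ + 1 := self_le_add_right _ 1
  exact ⟨hTFD, le_antisymm hle2 hge, hrankm⟩
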